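/- For every integer q ≥ 4, the inequality binomial(2q+1, q) - binomial(2q+1, q-2) < 2^q + binomial(2q+1, q-1) - binomial(2q+1, q-3) holds. -/
import Mathlib

lemma key12 (m : ℕ) :
    (2*m+15).choose (m+7) + (2*m+15).choose (m+4) ≤
      (2*m+15).choose (m+6) + (2*m+15).choose (m+5) := by
  obtain ⟨a, ha⟩ : ∃ x, (2*m+15).choose (m+4) = x := ⟨_, rfl⟩
  obtain ⟨b, hb⟩ : ∃ x, (2*m+15).choose (m+5) = x := ⟨_, rfl⟩
  obtain ⟨c, hc⟩ : ∃ x, (2*m+15).choose (m+6) = x := ⟨_, rfl⟩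
  obtain ⟨d, hd⟩ : ∃ x, (2*m+15).choose (m+7) = x := ⟨_, rfl⟩
  rw [ha, hb, hc, hd]
  have h1 : b * (m+5) = a * (m+11) := by
    have t := Nat.choose_succ_right_eq (2*m+15) (m+4)
    have e : 2*m+15 - (m+4) = m + 11 := by omega
    have e2 : m+4+1 = m+5 := by omega
    rw [e, e2, ha, hb] at t
    exact t
  have h2 : c * (m+6) = b * (m+10) := by
    have t := Nat.choose_succ_right_eq (2*m+15) (m+5)
    have e : 2*m+15 - (m+5) = m + 10 := by omega
    have e2 : m+5+1 = m+6 := by omega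
    rw [e, e2, hb, hc] at t
    exact t
  have h3 : d * (m+7) = c * (m+9) := by
    have t := Nat.choose_succ_right_eq (2*m+15) (m+6)
    have e : 2*m+15 - (m+6) = m + 9 := by omega
    have e2 : m+6+1 = m+7 := by omega
    rw [e, e2, hc, hd] at t
    exact t
  have P : 0 < (m+5)*((m+6)*(m+7)) := Nat.mul_pos (Nat.succ_pos _) (Nat.mul_pos (Nat.succ_pos _) (Nat.succ_pos _))
  have ed : d * ((m+5)*((m+6)*(m+7))) = a * ((m+9)*((m+10)*(m+11))) := by
    calc d * ((m+5)*((m+6)*(m+7))) = (d*(m+7))*((m+5)*(m+6)) := by ring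
      _ = (c*(m+9))*((m+5)*(m+6)) := by rw [h3]
      _ = (c*(m+6))*((m+5)*(m+9)) := by ring
      _ = (b*(m+10))*((m+5)*(m+9)) := by rw [h2]
      _ = (b*(m+5))*((m+9)*(m+10)) := by ring
      _ = (a*(m+11))*((m+9)*(m+10)) := by rw [h1]
      _ = a * ((m+9)*((m+10)*(m+11))) := by ring
  have ec : c * ((m+5)*((m+6)*(m+7))) = a * ((m+7)*((m+10)*(m+11))) := by
    calc c * ((m+5)*((m+6)*(m+7))) = (c*(m+6))*((m+5)*(m+7)) := by ring
      _ = (b*(m+10))*((m+5)*(m+7)) := by rw [h2]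
      _ = (b*(m+5))*((m+10)*(m+7)) := by ring
      _ = (a*(m+11))*((m+10)*(m+7)) := by rw [h1]
      _ = a * ((m+7)*((m+10)*(m+11))) := by ring
  have eb : b * ((m+5)*((m+6)*(m+7))) = a * ((m+6)*((m+7)*(m+11))) := by
    calc b * ((m+5)*((m+6)*(m+7))) = (b*(m+5))*((m+6)*(m+7)) := by ring
      _ = (a*(m+11))*((m+6)*(m+7)) := by rw [h1]
      _ = a * ((m+6)*((m+7)*(m+11))) := by ring
  have hmul : (d + a) * ((m+5)*((m+6)*(m+7))) ≤ (c + b) * ((m+5)*((m+6)*(m+7))) := by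
    have hpoly : (m+9)*((m+10)*(m+11)) + (m+5)*((m+6)*(m+7)) ≤
        (m+7)*((m+10)*(m+11)) + (m+6)*((m+7)*(m+11)) := by nlinarith [sq_nonneg m]
    calc (d + a) * ((m+5)*((m+6)*(m+7)))
        = d * ((m+5)*((m+6)*(m+7))) + a * ((m+5)*((m+6)*(m+7))) := by ring
      _ = a * ((m+9)*((m+10)*(m+11))) + a * ((m+5)*((m+6)*(m+7))) := by rw [ed]
      _ = a * ((m+9)*((m+10)*(m+11)) + (m+5)*((m+6)*(m+7))) := by ring
      _ ≤ a * ((m+7)*((m+10)*(m+11)) + (m+6)*((m+7)*(m+11))) :=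
          Nat.mul_le_mul_left a hpoly
      _ = a * ((m+7)*((m+10)*(m+11))) + a * ((m+6)*((m+7)*(m+11))) := by ring
      _ = c * ((m+5)*((m+6)*(m+7))) + b * ((m+5)*((m+6)*(m+7))) := by rw [ec, eb]
      _ = (c + b) * ((m+5)*((m+6)*(m+7))) := by ring
  exact Nat.le_of_mul_le_mul_right hmul P

theorem stmt12 (q : ℕ) (hq : 4 ≤ q) :
    ((2 * q + 1).choose q : ℤ) - (2 * q + 1).choose (q - 2) <
      2 ^ q + (2 * q + 1).choose (q - 1) - (2 * q + 1).choose (q - 3) := by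
  rcases Nat.lt_or_ge q 7 with h | h
  · interval_cases q <;> norm_num [Nat.choose]
  · obtain ⟨m, rfl⟩ : ∃ m, q = m + 7 := ⟨q - 7, by omega⟩
    have e1 : 2 * (m + 7) + 1 = 2 * m + 15 := by ring
    have e2 : m + 7 - 2 = m + 5 := by omega
    have e3 : m + 7 - 1 = m + 6 := by omega
    have e4 : m + 7 - 3 = m + 4 := by omega
    rw [e1, e2, e3, e4]
    have key := key12 m
    have keyZ : ((2*m+15).choose (m+7) : ℤ) + (2*m+15).choose (m+4) ≤
        (2*m+15).choose (m+6) + (2*m+15).choose (m+5) := by exact_mod_cast key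
    have hpow : (0 : ℤ) < 2 ^ (m + 7) := by positivity
    linarith
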